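/- Let F and F' be bounded-below minimal chain complexes of finitely generated free R-modules, and let f : F → F' be a quasi-isomorphism of chain complexes. Then f is an isomorphism of chain complexes. -/

import Mathlib

/-!
STATEMENT 2: Let `R` be a (possibly non-commutative) Noetherian local ring with maximal
ideal `m` (= the set of nonunits).  Let `F` and `F'` be bounded-below minimal chain
complexes of finitely generated free `R`-modules, and let `f : F → F'` be a
quasi-isomorphism of chain complexes.  Then `f` is an isomorphism of chain complexes.
-/

/-- The submodule `m·M` of an `R`-module `M`, for a left ideal `m` of `R`. -/
def idealSMulTop {R : Type} [Ring R] (m : Ideal R) (M : Type) [AddCommGroup M]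
    [Module R M] : Submodule R M :=
  Submodule.span R {z : M | ∃ a ∈ m, ∃ y : M, z = a • y}

/-- A chain complex of `R`-modules is minimal (w.r.t. the ideal `m`) if all its boundary
maps have image contained in `m` times the target. -/
def IsMinimalComplex {R : Type} [Ring R] (m : Ideal R)
    (F : ChainComplex (ModuleCat R) ℤ) : Prop :=
  ∀ (i j : ℤ) (x : F.X i), F.d i j x ∈ idealSMulTop m ↥(F.X j)

open CategoryTheory

namespace Stmt2Aux


variable {R : Type} [Ring R]

lemma isUnit_one_sub {m : Ideal R} (hloc : ∀ x : R, x ∈ m ↔ x ∈ nonunits R)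
    {a : R} (ha : a ∈ m) : IsUnit (1 - a) := by
  by_contra h
  have h1 : (1 : R) ∈ m := by
    have := m.add_mem ha ((hloc _).mpr (mem_nonunits_iff.mpr h))
    simpa using this
  exact (mem_nonunits_iff.mp ((hloc 1).mp h1)) isUnit_one

lemma mul_mem_right' [Nontrivial R] {m : Ideal R} (hloc : ∀ x : R, x ∈ m ↔ x ∈ nonunits R)
    {a : R} (ha : a ∈ m) (c : R) : a * c ∈ m := by
  rw [hloc, mem_nonunits_iff]
  intro hu
  obtain ⟨u, hu⟩ := hu
  have ha' : ¬ IsUnit a := mem_nonunits_iff.mp ((hloc a).mp ha)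
  set b := c * (↑u⁻¹ : R) with hb
  have hab : a * b = 1 := by
    rw [hb, ← mul_assoc, ← hu]
    exact u.mul_inv
  have he : (b * a) * (b * a) = b * a := by
    rw [mul_assoc b a (b * a), ← mul_assoc a b a, hab, one_mul]
  have he1 : b * a ≠ 1 := by
    intro h1
    exact ha' ⟨⟨a, b, hab, h1⟩, rfl⟩
  have hem : ¬ IsUnit (b * a) := by
    intro hue
    exact he1 (hue.mul_left_cancel (he.trans (mul_one _).symm))
  have h1em : ¬ IsUnit (1 - b * a) := by
    intro hu1
    have hz : (b * a) * (1 - b * a) = 0 * (1 - b * a) := by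
      rw [mul_sub, mul_one, he, sub_self, zero_mul]
    have he0 : b * a = 0 := hu1.mul_right_cancel hz
    have hb0 : b = 0 := by
      have : b * (a * b) = 0 := by rw [← mul_assoc, he0, zero_mul]
      rwa [hab, mul_one] at this
    have : (1 : R) = 0 := by rw [← hab, hb0, mul_zero]
    exact one_ne_zero this
  have h1 : (1 : R) ∈ m := by
    have := m.add_mem ((hloc _).mpr (mem_nonunits_iff.mpr hem))
      ((hloc _).mpr (mem_nonunits_iff.mpr h1em))
    simpa using this
  exact (mem_nonunits_iff.mp ((hloc 1).mp h1)) isUnit_one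

lemma smul_mem_idealSMulTop {m : Ideal R} {M : Type} [AddCommGroup M] [Module R M]
    {a : R} (ha : a ∈ m) (y : M) : a • y ∈ idealSMulTop m M :=
  Submodule.subset_span ⟨a, ha, y, rfl⟩

lemma idealSMulTop_map_le {m : Ideal R} {M N : Type} [AddCommGroup M] [Module R M]
    [AddCommGroup N] [Module R N] (g : M →ₗ[R] N) {x : M} (hx : x ∈ idealSMulTop m M) :
    g x ∈ idealSMulTop m N := by
  induction hx using Submodule.span_induction with
  | mem z hz =>
    obtain ⟨a, ha, y, rfl⟩ := hz
    rw [map_smul]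
    exact smul_mem_idealSMulTop ha _
  | zero => simpa using (idealSMulTop m N).zero_mem
  | add x y _ _ hx hy => rw [map_add]; exact Submodule.add_mem _ hx hy
  | smul r x _ hx => rw [map_smul]; exact Submodule.smul_mem _ r hx

lemma exists_rep [Nontrivial R] {m : Ideal R} (hloc : ∀ x : R, x ∈ m ↔ x ∈ nonunits R)
    {M : Type} [AddCommGroup M] [Module R M]
    (s : Finset M) (hs : Submodule.span R (s : Set M) = ⊤)
    {x : M} (hx : x ∈ idealSMulTop m M) :
    ∃ c : M → R, (∀ g, c g ∈ m) ∧ ∑ g ∈ s, c g • g = x := by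
  induction hx using Submodule.span_induction with
  | mem z hz =>
    obtain ⟨a, ha, y, rfl⟩ := hz
    obtain ⟨c, -, hc⟩ := Submodule.mem_span_finset.mp
      (show y ∈ Submodule.span R (s : Set M) by rw [hs]; trivial)
    refine ⟨fun g => a * c g, fun g => mul_mem_right' hloc ha _, ?_⟩
    rw [← hc, Finset.smul_sum]
    exact Finset.sum_congr rfl fun g _ => (mul_smul a (c g) g)
  | zero => exact ⟨0, fun g => m.zero_mem, by simp⟩
  | add u v _ _ hu hv =>
    obtain ⟨c, hc, hcs⟩ := hu
    obtain ⟨d, hd, hds⟩ := hv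
    refine ⟨c + d, fun g => m.add_mem (hc g) (hd g), ?_⟩
    simp only [Pi.add_apply, add_smul, Finset.sum_add_distrib, hcs, hds]
  | smul r u _ hu =>
    obtain ⟨c, hc, hcs⟩ := hu
    refine ⟨fun g => r * c g, fun g => m.smul_mem r (hc g), ?_⟩
    rw [← hcs, Finset.smul_sum]
    exact Finset.sum_congr rfl fun g _ => (mul_smul r (c g) g)

lemma nakayama [Nontrivial R] {m : Ideal R} (hloc : ∀ x : R, x ∈ m ↔ x ∈ nonunits R)
    (M : Type) [AddCommGroup M] [Module R M]
    (hfg : (⊤ : Submodule R M).FG) (htop : idealSMulTop m M = ⊤) : ∀ x : M, x = 0 := by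
  classical
  obtain ⟨s, hs⟩ := hfg
  suffices h : ∀ (n : ℕ) (s : Finset M), s.card ≤ n →
      Submodule.span R (s : Set M) = ⊤ → ∀ x : M, x = 0 from h s.card s le_rfl hs
  intro n
  induction n with
  | zero =>
    intro s hcard hs x
    have : s = ∅ := Finset.card_eq_zero.mp (Nat.le_zero.mp hcard)
    subst this
    have hx : x ∈ Submodule.span R ((∅ : Finset M) : Set M) := by rw [hs]; trivial
    simpa using hx
  | succ n ih =>
    intro s hcard hs x
    rcases Finset.eq_empty_or_nonempty s with rfl | ⟨g₀, hg₀⟩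
    · have hx : x ∈ Submodule.span R ((∅ : Finset M) : Set M) := by rw [hs]; trivial
      simpa using hx
    · have hg₀m : g₀ ∈ idealSMulTop m M := by rw [htop]; trivial
      obtain ⟨c, hc, hsum⟩ := exists_rep hloc s hs hg₀m
      have key : (1 - c g₀) • g₀ = ∑ g ∈ s.erase g₀, c g • g := by
        rw [sub_smul, one_smul]
        rw [← Finset.add_sum_erase s (fun g => c g • g) hg₀] at hsum
        exact sub_eq_of_eq_add' hsum.symm
      obtain ⟨v, hv⟩ := isUnit_one_sub hloc (hc g₀)
      have hg₀span : g₀ ∈ Submodule.span R ((s.erase g₀ : Finset M) : Set M) := by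
        have h2 : (1 - c g₀) • g₀ ∈ Submodule.span R ((s.erase g₀ : Finset M) : Set M) := by
          rw [key]
          exact Submodule.sum_mem _ fun g hg =>
            Submodule.smul_mem _ _ (Submodule.subset_span hg)
        have h3 : (↑v⁻¹ : R) • ((1 - c g₀) • g₀) = g₀ := by
          rw [← hv, smul_smul, Units.inv_mul, one_smul]
        have h4 := Submodule.smul_mem _ ((↑v⁻¹ : R)) h2
        rwa [h3] at h4
      have hspan' : Submodule.span R ((s.erase g₀ : Finset M) : Set M) = ⊤ := by
        rw [eq_top_iff, ← hs, Submodule.span_le]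
        intro g hg
        rcases eq_or_ne g g₀ with rfl | hne
        · exact hg₀span
        · exact Submodule.subset_span (Finset.mem_erase.mpr ⟨hne, hg⟩)
      exact ih (s.erase g₀) (by rw [Finset.card_erase_of_mem hg₀]; omega) hspan' x




lemma homology_epi_elem {S₁ S₂ : ShortComplex (ModuleCat R)} (φ : S₁ ⟶ S₂)
    (h : IsIso (ShortComplex.homologyMap φ)) (y : S₂.X₂) (hy : S₂.g y = 0) :
    ∃ (x : S₁.X₂) (u : S₂.X₁), S₁.g x = 0 ∧ y = φ.τ₂ x + S₂.f u := by
  let γ := ShortComplex.leftHomologyMapData φ S₁.moduleCatLeftHomologyData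
    S₂.moduleCatLeftHomologyData
  have heq : γ.φH = S₁.moduleCatLeftHomologyData.homologyIso.inv ≫
      ShortComplex.homologyMap φ ≫ S₂.moduleCatLeftHomologyData.homologyIso.hom := by
    rw [γ.homologyMap_eq]
    simp
  have hγ : IsIso γ.φH := by rw [heq]; infer_instance
  have hsurjH : Function.Surjective γ.φH := by
    haveI := hγ
    exact (ModuleCat.epi_iff_surjective γ.φH).mp inferInstance
  set k₂ : LinearMap.ker S₂.g.hom := ⟨y, hy⟩ with hk₂
  obtain ⟨h1, hh1⟩ := hsurjH ((LinearMap.range S₂.moduleCatToCycles).mkQ k₂)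
  obtain ⟨k₁, rfl⟩ := Submodule.mkQ_surjective _ h1
  let kk : LinearMap.ker S₂.g.hom := γ.φK k₁
  have hπ : γ.φH ((LinearMap.range S₁.moduleCatToCycles).mkQ k₁) =
      (LinearMap.range S₂.moduleCatToCycles).mkQ kk := by
    have := ConcreteCategory.congr_hom γ.commπ k₁
    exact this
  have hz : (LinearMap.range S₂.moduleCatToCycles).mkQ (k₂ - kk) = 0 := by
    rw [map_sub, ← hh1, hπ, sub_self]
  obtain ⟨u, hu⟩ : k₂ - kk ∈ LinearMap.range S₂.moduleCatToCycles :=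
    (Submodule.Quotient.mk_eq_zero _).mp hz
  have hK : (kk : S₂.X₂) = φ.τ₂ (k₁ : S₁.X₂) := by
    have := ConcreteCategory.congr_hom γ.commi k₁
    exact this
  refine ⟨(k₁ : S₁.X₂), u, k₁.2, ?_⟩
  have hval := congrArg (Subtype.val) hu
  simp only [Submodule.coe_sub] at hval
  change S₂.f u = _ at hval
  rw [hK] at hval
  rw [hval]
  show y = φ.τ₂ ↑k₁ + (y - φ.τ₂ ↑k₁)
  abel

lemma homology_mono_elem {S₁ S₂ : ShortComplex (ModuleCat R)} (φ : S₁ ⟶ S₂)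
    (h : IsIso (ShortComplex.homologyMap φ)) (x : S₁.X₂) (hx : S₁.g x = 0)
    (u : S₂.X₁) (hu : φ.τ₂ x = S₂.f u) :
    ∃ w : S₁.X₁, S₁.f w = x := by
  let γ := ShortComplex.leftHomologyMapData φ S₁.moduleCatLeftHomologyData
    S₂.moduleCatLeftHomologyData
  have heq : γ.φH = S₁.moduleCatLeftHomologyData.homologyIso.inv ≫
      ShortComplex.homologyMap φ ≫ S₂.moduleCatLeftHomologyData.homologyIso.hom := by
    rw [γ.homologyMap_eq]
    simp
  have hγ : IsIso γ.φH := by rw [heq]; infer_instance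
  have hinjH : Function.Injective γ.φH := by
    haveI := hγ
    exact (ModuleCat.mono_iff_injective γ.φH).mp inferInstance
  set k₁ : LinearMap.ker S₁.g.hom := ⟨x, hx⟩ with hk₁
  let kk : LinearMap.ker S₂.g.hom := γ.φK k₁
  have hK0 : (kk : S₂.X₂) = φ.τ₂ (k₁ : S₁.X₂) := by
    have := ConcreteCategory.congr_hom γ.commi k₁
    exact this
  have hK : kk = S₂.moduleCatToCycles u := by
    apply Subtype.val_injective
    show (kk : S₂.X₂) = _
    rw [hK0]
    exact hu
  have hπ : γ.φH ((LinearMap.range S₁.moduleCatToCycles).mkQ k₁) = 0 := by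
    have hc := ConcreteCategory.congr_hom γ.commπ k₁
    rw [show γ.φH ((LinearMap.range S₁.moduleCatToCycles).mkQ k₁) = (LinearMap.range S₂.moduleCatToCycles).mkQ kk from hc, hK]
    exact (Submodule.Quotient.mk_eq_zero _).mpr ⟨u, rfl⟩
  have h0 : (LinearMap.range S₁.moduleCatToCycles).mkQ k₁ = 0 := hinjH (by rw [hπ]; exact (map_zero _).symm)
  obtain ⟨w, hw⟩ := (Submodule.Quotient.mk_eq_zero _).mp h0
  exact ⟨w, congrArg Subtype.val hw⟩

end Stmt2Aux

theorem stmt_2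
    (R : Type) [Ring R] [IsNoetherianRing R] [Nontrivial R]
    (m : Ideal R) (hloc : ∀ x : R, x ∈ m ↔ x ∈ nonunits R)
    (F F' : ChainComplex (ModuleCat R) ℤ)
    (hF_free : ∀ i, Module.Free R ↥(F.X i)) (hF_fin : ∀ i, Module.Finite R ↥(F.X i))
    (hF'_free : ∀ i, Module.Free R ↥(F'.X i)) (hF'_fin : ∀ i, Module.Finite R ↥(F'.X i))
    (hF_min : IsMinimalComplex m F) (hF'_min : IsMinimalComplex m F')
    (hF_bdd : ∃ N : ℤ, ∀ i < N, Subsingleton ↥(F.X i))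
    (hF'_bdd : ∃ N : ℤ, ∀ i < N, Subsingleton ↥(F'.X i))
    (f : F ⟶ F') (hf : QuasiIso f) :
    CategoryTheory.IsIso f := by
  classical
  haveI := hf
  obtain ⟨N₁, hN₁⟩ := hF_bdd
  obtain ⟨N₂, hN₂⟩ := hF'_bdd
  set N : ℤ := min N₁ N₂ with hN
  have hqi : ∀ (i j k : ℤ), j + 1 = i → k + 1 = j →
      IsIso (ShortComplex.homologyMap
        ((HomologicalComplex.shortComplexFunctor' (ModuleCat R)
          (ComplexShape.down ℤ) i j k).map f)) := by
    intro i j k hij hjk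
    rw [← ShortComplex.quasiIso_iff]
    rw [← quasiIsoAt_iff' f i j k
      ((ComplexShape.down ℤ).prev_eq' (by simp [hij]))
      ((ComplexShape.down ℤ).next_eq' (by simp [hjk]))]
    infer_instance
  have Hmono : ∀ (i j k : ℤ), j + 1 = i → k + 1 = j → ∀ x : F.X j, F.d j k x = 0 →
      ∀ u : F'.X i, f.f j x = F'.d i j u → ∃ w : F.X i, F.d i j w = x := by
    intro i j k hij hjk x hx u hu
    exact Stmt2Aux.homology_mono_elem _ (hqi i j k hij hjk) x hx u hu
  have Hepi : ∀ (i j k : ℤ), j + 1 = i → k + 1 = j → ∀ y : F'.X j, F'.d j k y = 0 →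
      ∃ (x : F.X j) (u : F'.X i), F.d j k x = 0 ∧ y = f.f j x + F'.d i j u := by
    intro i j k hij hjk y hy
    exact Stmt2Aux.homology_epi_elem _ (hqi i j k hij hjk) y hy
  have comm_apply : ∀ (i j : ℤ) (x : F.X i), F'.d i j (f.f i x) = f.f j (F.d i j x) := by
    intro i j x
    have h := ConcreteCategory.congr_hom (f.comm i j) x
    rw [ConcreteCategory.comp_apply, ConcreteCategory.comp_apply] at h
    exact h
  have ddF : ∀ (i j k : ℤ) (x : F.X i), F.d j k (F.d i j x) = 0 := by
    intro i j k x
    have h := ConcreteCategory.congr_hom (F.d_comp_d i j k) x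
    rw [ConcreteCategory.comp_apply] at h
    simp only [ModuleCat.hom_zero, LinearMap.zero_apply] at h
    exact h
  have ddF' : ∀ (i j k : ℤ) (x : F'.X i), F'.d j k (F'.d i j x) = 0 := by
    intro i j k x
    have h := ConcreteCategory.congr_hom (F'.d_comp_d i j k) x
    rw [ConcreteCategory.comp_apply] at h
    simp only [ModuleCat.hom_zero, LinearMap.zero_apply] at h
    exact h
  -- the inductive step
  have step : ∀ n : ℤ, Function.Bijective (f.f (n-1)) → Function.Bijective (f.f (n-2)) →
      Function.Bijective (f.f n) := by
    intro n hb1 hb2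
    haveI := hF_fin n; haveI := hF'_fin n; haveI := hF'_free n; haveI := hF_fin n
    haveI : IsNoetherian R ↥(F.X n) := inferInstance
    -- surjectivity
    have hcok : ∀ y : F'.X n, ∃ (x : F.X n) (u : F'.X (n+1)),
        y = f.f n x + F'.d (n+1) n u := by
      intro y
      obtain ⟨x, hx⟩ := hb1.2 (F'.d n (n-1) y)
      have hdx : F.d (n-1) (n-2) x = 0 := by
        apply hb2.1
        rw [map_zero, ← comm_apply, hx, ddF']
      obtain ⟨z, hz⟩ := Hmono n (n-1) (n-2) (by ring) (by ring) x hdx y hx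
      have hy' : F'.d n (n-1) (y - f.f n z) = 0 := by
        rw [map_sub, comm_apply, hz, hx, sub_self]
      obtain ⟨x₂, u, hx₂, hyy⟩ := Hepi (n+1) n (n-1) rfl (by ring) (y - f.f n z) hy'
      refine ⟨z + x₂, u, ?_⟩
      rw [map_add]
      have h2 := eq_add_of_sub_eq hyy
      rw [h2]
      abel
    have hsurj : Function.Surjective (f.f n) := by
      set q : Submodule R ↥(F'.X n) := LinearMap.range (f.f n).hom
        with hq
      have hJ : idealSMulTop m (↥(F'.X n) ⧸ q) = ⊤ := by
        rw [eq_top_iff]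
        rintro z -
        obtain ⟨y, rfl⟩ := Submodule.mkQ_surjective q z
        obtain ⟨x, u, hyx⟩ := hcok y
        have hmk : q.mkQ y = q.mkQ (F'.d (n+1) n u) := by
          rw [Submodule.mkQ_apply, Submodule.mkQ_apply, Submodule.Quotient.eq]
          refine ⟨x, ?_⟩
          rw [hyx]; abel
        rw [hmk]
        exact Stmt2Aux.idealSMulTop_map_le q.mkQ (hF'_min (n+1) n u)
      have hall := Stmt2Aux.nakayama hloc (↥(F'.X n) ⧸ q) (Module.finite_def.mp inferInstance) hJ
      intro y
      have h0 : q.mkQ y = 0 := hall _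
      rw [Submodule.mkQ_apply, Submodule.Quotient.mk_eq_zero] at h0
      exact h0
    -- injectivity
    have hker : ∀ x : F.X n, f.f n x = 0 → x ∈ idealSMulTop m ↥(F.X n) := by
      intro x hx0
      have hdx : F.d n (n-1) x = 0 := by
        apply hb1.1
        rw [map_zero, ← comm_apply, hx0, map_zero]
      obtain ⟨w, hw⟩ := Hmono (n+1) n (n-1) rfl (by ring) x hdx 0 (by rw [hx0, map_zero])
      rw [← hw]
      exact hF_min (n+1) n w
    have hinj : Function.Injective (f.f n) := by
      obtain ⟨s, hs⟩ := Module.projective_lifting_property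
        (f.f n).hom LinearMap.id hsurj
      set K : Submodule R ↥(F.X n) := LinearMap.ker (f.f n).hom
        with hKdef
      let p : ↥(F.X n) →ₗ[R] ↥K := LinearMap.codRestrict K
        (LinearMap.id - s ∘ₗ (f.f n).hom)
        (fun x => by
          have hsx := DFunLike.congr_fun hs ((f.f n) x)
          simp only [LinearMap.coe_comp, Function.comp_apply, LinearMap.id_apply] at hsx
          have hv : (f.f n) (((LinearMap.id : ↥(F.X n) →ₗ[R] ↥(F.X n)) - s ∘ₗ (f.f n).hom) x)
              = 0 := by
            simp only [LinearMap.sub_apply, LinearMap.id_apply, LinearMap.coe_comp,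
              Function.comp_apply, map_sub, hsx, sub_self]
          exact LinearMap.mem_ker.mpr hv)
      have hJK : idealSMulTop m ↥K = ⊤ := by
        rw [eq_top_iff]
        rintro ⟨x, hx⟩ -
        have hx0 : f.f n x = 0 := hx
        have h1 : p x = ⟨x, hx⟩ := by
          apply Subtype.val_injective
          show ((LinearMap.id : ↥(F.X n) →ₗ[R] ↥(F.X n))
            - s ∘ₗ (f.f n).hom) x = x
          simp only [LinearMap.sub_apply, LinearMap.id_apply, LinearMap.coe_comp,
            Function.comp_apply, hx0, map_zero, sub_zero]
        rw [← h1]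
        exact Stmt2Aux.idealSMulTop_map_le p (hker x hx0)
      have hall := Stmt2Aux.nakayama hloc (↥K)
        ((Submodule.fg_top K).mpr (IsNoetherian.noetherian K)) hJK
      rw [← LinearMap.ker_eq_bot (f := (f.f n).hom)]
      rw [eq_bot_iff]
      intro x hx
      have := hall ⟨x, hx⟩
      simpa [Submodule.mem_bot] using congrArg Subtype.val this
    exact ⟨hinj, hsurj⟩
  have base : ∀ n : ℤ, n < N → Function.Bijective (f.f n) := by
    intro n hn
    haveI := hN₁ n (lt_of_lt_of_le hn (min_le_left _ _))
    haveI := hN₂ n (lt_of_lt_of_le hn (min_le_right _ _))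
    constructor
    · intro a b _
      exact Subsingleton.elim a b
    · intro y
      exact ⟨0, Subsingleton.elim _ _⟩
  have all : ∀ n : ℤ, Function.Bijective (f.f n) := by
    have aux : ∀ (k : ℕ) (n : ℤ), n < N + k → Function.Bijective (f.f n) := by
      intro k
      induction k with
      | zero =>
        intro n hn
        exact base n (by push_cast at hn; omega)
      | succ k ih =>
        intro n hn
        by_cases hcase : n < N + k
        · exact ih n hcase
        · exact step n (ih _ (by push_cast at hn hcase ⊢; omega))
            (ih _ (by push_cast at hn hcase ⊢; omega))
    intro n
    exact aux (n - N + 1).toNat n (by push_cast; omega)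
  haveI : ∀ n : ℤ, IsIso (f.f n) := by
    intro n
    let e := LinearEquiv.ofBijective (f.f n).hom (all n)
    refine ⟨ModuleCat.ofHom e.symm.toLinearMap, ?_, ?_⟩
    · ext x
      exact e.symm_apply_apply x
    · ext x
      exact e.apply_symm_apply x
  exact HomologicalComplex.Hom.isIso_of_components f
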